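/- For the random field Ising model on V_n with Gaussian disorder, let r_{x,y} = E(⟨σ_x σ_y⟩ − ⟨σ_x⟩⟨σ_y⟩), where ⟨·⟩ is the Gibbs expectation and E is expectation over the disorder. Then Σ_{x,y ∈ V_n} r_{x,y}² ≤ (2 + h²)|V_n| / h². -/

import Mathlib

open Finset MeasureTheory ProbabilityTheory Real Filter

noncomputable section

/-- The box `V_n = ℤ^d ∩ [1,n]^d`. -/
def box (d n : ℕ) : Finset (Fin d → ℤ) := Fintype.piFinset fun _ => Finset.Icc 1 (n : ℤ)

/-- Spin configurations on `V_n`, a spin is encoded by a `Bool`. -/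
abbrev Config (d n : ℕ) := {x // x ∈ box d n} → Bool

/-- The spin value `±1` of a `Bool`. -/
def spin (b : Bool) : ℝ := if b then 1 else -1

/-- The (negative) Hamiltonian `β ∑_{⟨xy⟩} σ_x σ_y + h ∑_x g_x σ_x`, where
`⟨xy⟩` ranges over nearest-neighbor pairs in the box (each ordered pair counted
with weight 1/2, i.e. each unordered pair once). -/
def energy (d n : ℕ) (β h : ℝ) (g : {x // x ∈ box d n} → ℝ) (σ : Config d n) : ℝ :=
  β * ((1 : ℝ) / 2 * ∑ x : {x // x ∈ box d n}, ∑ y : {x // x ∈ box d n},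
      if (∑ i, |x.1 i - y.1 i|) = 1 then spin (σ x) * spin (σ y) else 0)
  + h * ∑ x, g x * spin (σ x)

/-- The partition function `Z_n(β,h)`. -/
def Z (d n : ℕ) (β h : ℝ) (g : {x // x ∈ box d n} → ℝ) : ℝ :=
  ∑ σ : Config d n, Real.exp (energy d n β h g σ)

/-- Gibbs expectation `⟨f⟩`. -/
def gibbs (d n : ℕ) (β h : ℝ) (g : {x // x ∈ box d n} → ℝ) (f : Config d n → ℝ) : ℝ :=
  (∑ σ : Config d n, f σ * Real.exp (energy d n β h g σ)) / Z d n β h g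

/-- Two-replica Gibbs expectation. -/
def gibbs2 (d n : ℕ) (β h : ℝ) (g : {x // x ∈ box d n} → ℝ)
    (f : Config d n → Config d n → ℝ) : ℝ :=
  (∑ σ1 : Config d n, ∑ σ2 : Config d n,
    f σ1 σ2 * (Real.exp (energy d n β h g σ1) * Real.exp (energy d n β h g σ2)))
    / (Z d n β h g) ^ 2

/-- The overlap `R_{1,2}` of two configurations. -/
def overlap (d n : ℕ) (σ1 σ2 : Config d n) : ℝ :=
  ((box d n).card : ℝ)⁻¹ * ∑ x, spin (σ1 x) * spin (σ2 x)

/-- The disorder: i.i.d. standard Gaussians indexed by the box. -/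
def μdis (d n : ℕ) : Measure ({x // x ∈ box d n} → ℝ) :=
  Measure.pi fun _ => gaussianReal 0 1

/-- Partial derivative in the coordinate `x`. -/
def pd {ι : Type*} [DecidableEq ι] (x : ι) (F : (ι → ℝ) → ℝ) : (ι → ℝ) → ℝ :=
  fun g => deriv (fun t => F (Function.update g x t)) (g x)

end


noncomputable section
set_option linter.unusedSectionVars false
set_option linter.unusedVariables false

/-- The standard Gaussian density. -/
def gpdf (x : ℝ) : ℝ := (Real.sqrt (2 * π))⁻¹ * Real.exp (-x ^ 2 / 2)

lemma gpdf_eq : gaussianPDFReal 0 1 = gpdf := by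
  ext x
  simp [gaussianPDFReal, gpdf]

lemma gpdf_pos (x : ℝ) : 0 < gpdf x := by
  have h : 0 < Real.sqrt (2 * π) := Real.sqrt_pos.2 (by positivity)
  exact mul_pos (inv_pos.2 h) (Real.exp_pos _)

lemma hasDerivAt_gpdf (x : ℝ) : HasDerivAt gpdf (-x * gpdf x) x := by
  have h1 : HasDerivAt (fun x : ℝ => -x ^ 2 / 2) (-x) x := by
    have := ((hasDerivAt_pow 2 x).fun_neg).div_const 2
    exact this.congr_deriv (by ring)
  have := (h1.exp).const_mul (Real.sqrt (2 * π))⁻¹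
  exact this.congr_deriv (by simp only [gpdf]; ring)

lemma one_add_sq_sq_le (x : ℝ) : (1 + x ^ 2) ^ 2 ≤ 81 * Real.exp (x ^ 2 / 4) := by
  have h1 : (1 : ℝ) ≤ Real.exp (x ^ 2 / 8) := by
    rw [Real.one_le_exp_iff]; positivity
  have h2 : x ^ 2 ≤ 8 * Real.exp (x ^ 2 / 8) := by
    have := Real.add_one_le_exp (x ^ 2 / 8)
    nlinarith [sq_nonneg x, Real.exp_pos (x ^ 2 / 8)]
  have h3 : 1 + x ^ 2 ≤ 9 * Real.exp (x ^ 2 / 8) := by linarith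
  have h4 : (1 + x ^ 2) ^ 2 ≤ (9 * Real.exp (x ^ 2 / 8)) ^ 2 := by
    have : 0 ≤ 1 + x ^ 2 := by positivity
    exact pow_le_pow_left₀ this h3 2
  calc (1 + x ^ 2) ^ 2 ≤ (9 * Real.exp (x ^ 2 / 8)) ^ 2 := h4
    _ = 81 * Real.exp (x ^ 2 / 4) := by
        rw [mul_pow, pow_two (Real.exp (x ^ 2 / 8)), ← Real.exp_add]
        have h8 : x ^ 2 / 8 + x ^ 2 / 8 = x ^ 2 / 4 := by ring
        rw [h8]; norm_num

/-- Master domination bound. -/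
lemma poly_gauss_le (x : ℝ) : (1 + x ^ 2) ^ 2 * Real.exp (-x ^ 2 / 2) ≤
    81 * Real.exp (-(1/4) * x ^ 2) := by
  have h := one_add_sq_sq_le x
  have he : Real.exp (x ^ 2 / 4) * Real.exp (-x ^ 2 / 2) = Real.exp (-(1/4) * x ^ 2) := by
    rw [← Real.exp_add]; congr 1; ring
  calc (1 + x ^ 2) ^ 2 * Real.exp (-x ^ 2 / 2)
      ≤ 81 * Real.exp (x ^ 2 / 4) * Real.exp (-x ^ 2 / 2) :=
        mul_le_mul_of_nonneg_right h (Real.exp_pos _).le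
    _ = 81 * Real.exp (-(1/4) * x ^ 2) := by rw [mul_assoc, he]

lemma integrable_of_poly_gauss_bound {f : ℝ → ℝ} (hf : Continuous f) (C : ℝ)
    (hb : ∀ x, |f x| ≤ C * ((1 + x ^ 2) ^ 2 * Real.exp (-x ^ 2 / 2))) :
    Integrable f := by
  have hC : 0 ≤ C := by
    have := hb 0
    have h0 : (0:ℝ) ≤ |f 0| := abs_nonneg _
    nlinarith [Real.exp_pos (-(0:ℝ) ^ 2 / 2), abs_nonneg (f 0), hb 0]
  refine Integrable.mono' ((integrable_exp_neg_mul_sq (by norm_num : (0:ℝ) < 1/4)).const_mul (C * 81))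
    hf.aestronglyMeasurable (Filter.Eventually.of_forall fun x => ?_)
  have h1 := poly_gauss_le x
  have h2 := hb x
  have h3 : (0:ℝ) ≤ (1 + x ^ 2) ^ 2 * Real.exp (-x ^ 2 / 2) := by positivity
  calc ‖f x‖ = |f x| := rfl
    _ ≤ C * ((1 + x ^ 2) ^ 2 * Real.exp (-x ^ 2 / 2)) := h2
    _ ≤ C * (81 * Real.exp (-(1/4) * x ^ 2)) := by nlinarith
    _ = C * 81 * Real.exp (-(1/4) * x ^ 2) := by ring

lemma tendsto_of_poly_gauss_bound {f : ℝ → ℝ} (C : ℝ)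
    (hb : ∀ x, |f x| ≤ C * ((1 + x ^ 2) ^ 2 * Real.exp (-x ^ 2 / 2)))
    (l : Filter ℝ) (hl : Tendsto (fun x : ℝ => -(1/4) * x ^ 2) l atBot) :
    Tendsto f l (nhds 0) := by
  have hC : 0 ≤ C := by
    nlinarith [Real.exp_pos (-(0:ℝ) ^ 2 / 2), abs_nonneg (f 0), hb 0]
  have hg : Tendsto (fun x : ℝ => C * 81 * Real.exp (-(1/4) * x ^ 2)) l (nhds 0) := by
    have := (Real.tendsto_exp_atBot.comp hl).const_mul (C * 81)
    simpa using this
  refine squeeze_zero_norm (fun x => ?_) hg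
  have h1 := poly_gauss_le x
  have h2 := hb x
  calc ‖f x‖ = |f x| := rfl
    _ ≤ C * ((1 + x ^ 2) ^ 2 * Real.exp (-x ^ 2 / 2)) := h2
    _ ≤ C * 81 * Real.exp (-(1/4) * x ^ 2) := by nlinarith

lemma continuous_gpdf : Continuous gpdf :=
  continuous_const.mul (((continuous_pow 2).neg.div_const 2).rexp)

lemma gpdf_le (x : ℝ) : gpdf x ≤ (Real.sqrt (2 * π))⁻¹ * Real.exp (-x ^ 2 / 2) := le_rfl

lemma gaussianReal_eq_withDensity :
    gaussianReal 0 1 = MeasureTheory.Measure.withDensity MeasureTheory.volume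
      (fun x => ((gpdf x).toNNReal : ENNReal)) := by
  rw [gaussianReal_of_var_ne_zero 0 one_ne_zero]
  congr 1
  ext x
  rw [gaussianPDF_def, gpdf_eq]
  rfl

lemma integral_gauss_eq (f : ℝ → ℝ) :
    ∫ x, f x ∂(gaussianReal 0 1) = ∫ x, gpdf x * f x := by
  rw [gaussianReal_eq_withDensity,
    integral_withDensity_eq_integral_smul (continuous_gpdf.measurable.real_toNNReal) f]
  refine integral_congr_ae (Filter.Eventually.of_forall fun x => ?_)
  simp [NNReal.smul_def, Real.coe_toNNReal _ (gpdf_pos x).le]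

lemma integrable_gauss_iff (f : ℝ → ℝ) :
    Integrable f (gaussianReal 0 1) ↔ Integrable (fun x => gpdf x * f x) := by
  rw [gaussianReal_eq_withDensity,
    integrable_withDensity_iff_integrable_smul (continuous_gpdf.measurable.real_toNNReal)]
  constructor <;> intro h <;>
  · refine h.congr (Filter.Eventually.of_forall fun x => ?_)
    simp [NNReal.smul_def, Real.coe_toNNReal _ (gpdf_pos x).le]

lemma integrable_gauss_of_bound (f : ℝ → ℝ) (hf : Continuous f) (C : ℝ)
    (hb : ∀ x, |f x| ≤ C * (1 + x ^ 2)) : Integrable f (gaussianReal 0 1) := by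
  rw [integrable_gauss_iff]
  refine integrable_of_poly_gauss_bound (continuous_gpdf.mul hf) (C * (Real.sqrt (2 * π))⁻¹) ?_
  intro x
  have h1 : (0:ℝ) < Real.sqrt (2 * π) := Real.sqrt_pos.2 (by positivity)
  have h2 : gpdf x = (Real.sqrt (2 * π))⁻¹ * Real.exp (-x ^ 2 / 2) := rfl
  have h3 := hb x
  have h4 : (0:ℝ) ≤ C := by
    have h0 := hb 0
    norm_num at h0
    linarith [abs_nonneg (f 0)]
  have h5 : (0:ℝ) < Real.exp (-x ^ 2 / 2) := Real.exp_pos _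
  rw [abs_mul, abs_of_pos (gpdf_pos x), h2]
  have h6 : (1 + x ^ 2) ≤ (1 + x ^ 2) ^ 2 := by nlinarith [sq_nonneg x, sq_nonneg (x^2)]
  calc (Real.sqrt (2 * π))⁻¹ * Real.exp (-x ^ 2 / 2) * |f x|
      ≤ (Real.sqrt (2 * π))⁻¹ * Real.exp (-x ^ 2 / 2) * (C * (1 + x ^ 2)) := by
        have : (0:ℝ) ≤ (Real.sqrt (2 * π))⁻¹ * Real.exp (-x ^ 2 / 2) := by positivity
        exact mul_le_mul_of_nonneg_left h3 this
    _ ≤ C * (Real.sqrt (2 * π))⁻¹ * ((1 + x ^ 2) ^ 2 * Real.exp (-x ^ 2 / 2)) := by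
        nlinarith [mul_le_mul_of_nonneg_left h6 (mul_nonneg h4 (inv_pos.2 h1).le), Real.exp_pos (-x^2/2)]

lemma sq_tendsto_atTop : Tendsto (fun x : ℝ => -(1/4) * x ^ 2) atTop atBot := by
  have h : Tendsto (fun x : ℝ => x ^ 2) atTop atTop := tendsto_pow_atTop two_ne_zero
  have h2 : Tendsto (fun x : ℝ => x ^ 2 / 4) atTop atTop := h.atTop_div_const (by norm_num)
  have h3 := tendsto_neg_atTop_atBot.comp h2
  refine h3.congr fun x => ?_
  simp [Function.comp]; ring

lemma sq_tendsto_atBot : Tendsto (fun x : ℝ => -(1/4) * x ^ 2) atBot atBot := by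
  have h0 : Tendsto (fun x : ℝ => -x) atBot atTop := tendsto_neg_atBot_atTop
  have h : Tendsto (fun x : ℝ => x ^ 2) atBot atTop := by
    have := (tendsto_pow_atTop (two_ne_zero)).comp h0
    refine this.congr fun x => ?_
    simp [Function.comp, neg_pow]
  have h2 : Tendsto (fun x : ℝ => x ^ 2 / 4) atBot atTop := h.atTop_div_const (by norm_num)
  have h3 := tendsto_neg_atTop_atBot.comp h2
  refine h3.congr fun x => ?_
  simp [Function.comp]; ring

/-- Gaussian integration by parts: `E[t φ(t)] = E[φ'(t)]` for Lipschitz `φ`. -/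
theorem gauss_ibp (φ φ' : ℝ → ℝ) (hder : ∀ t, HasDerivAt φ (φ' t) t)
    (hcont : Continuous φ') {L : ℝ} (hL : ∀ t, |φ' t| ≤ L) :
    ∫ t, t * φ t ∂(gaussianReal 0 1) = ∫ t, φ' t ∂(gaussianReal 0 1) := by
  have hφc : Continuous φ := by
    rw [continuous_iff_continuousAt]; exact fun t => (hder t).continuousAt
  have hL0 : (0:ℝ) ≤ L := le_trans (abs_nonneg _) (hL 0)
  have hgrow : ∀ t : ℝ, |φ t| ≤ |φ 0| + L * |t| := by
    intro t
    have := Convex.norm_image_sub_le_of_norm_hasDerivWithin_le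
      (f := φ) (f' := φ') (s := Set.univ) (C := L)
      (fun x _ => (hder x).hasDerivWithinAt) (fun x _ => hL x) convex_univ
      (Set.mem_univ 0) (Set.mem_univ t)
    simp only [Real.norm_eq_abs, sub_zero] at this
    calc |φ t| ≤ |φ t - φ 0| + |φ 0| := by
          have := abs_sub_abs_le_abs_sub (φ t) (φ 0); linarith [abs_sub_comm (φ t) (φ 0)]
      _ ≤ |φ 0| + L * |t| := by linarith
  set c : ℝ := (Real.sqrt (2 * π))⁻¹ with hc
  have hc0 : (0:ℝ) < c := inv_pos.2 (Real.sqrt_pos.2 (by positivity))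
  set C0 : ℝ := |φ 0| + L with hC0
  have hC00 : (0:ℝ) ≤ C0 := by have := abs_nonneg (φ 0); rw [hC0]; linarith
  have habs : ∀ x : ℝ, |x| ≤ 1 + x ^ 2 := by
    intro x
    rcases le_or_gt (|x|) 1 with h | h
    · nlinarith [sq_nonneg x]
    · nlinarith [sq_abs x]
  have hphi_b : ∀ x : ℝ, |φ x| ≤ C0 * (1 + x ^ 2) := by
    intro x
    have h1 := hgrow x
    have h2 := habs x
    have h3 := abs_nonneg x
    nlinarith [abs_nonneg (φ 0), sq_nonneg x]
  -- ψ and its derivative D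
  set ψ : ℝ → ℝ := fun x => φ x * gpdf x with hψ
  set D : ℝ → ℝ := fun x => φ' x * gpdf x + φ x * (-x * gpdf x) with hD
  have hderψ : ∀ x, HasDerivAt ψ (D x) x := fun x => (hder x).mul (hasDerivAt_gpdf x)
  have hgpdf_eq : ∀ x : ℝ, gpdf x = c * Real.exp (-x ^ 2 / 2) := fun x => rfl
  have hDb : ∀ x : ℝ, |D x| ≤ ((L + C0) * c) * ((1 + x ^ 2) ^ 2 * Real.exp (-x ^ 2 / 2)) := by
    intro x
    have h1 : |D x| ≤ L * gpdf x + C0 * (1 + x ^ 2) * (|x| * gpdf x) := by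
      have := abs_add_le (φ' x * gpdf x) (φ x * (-x * gpdf x))
      rw [abs_mul, abs_mul, abs_mul, abs_of_pos (gpdf_pos x), abs_neg] at this
      have e1 : |φ' x| * gpdf x ≤ L * gpdf x :=
        mul_le_mul_of_nonneg_right (hL x) (gpdf_pos x).le
      have e2 : |φ x| * (|x| * gpdf x) ≤ C0 * (1 + x ^ 2) * (|x| * gpdf x) :=
        mul_le_mul_of_nonneg_right (hphi_b x) (mul_nonneg (abs_nonneg x) (gpdf_pos x).le)
      calc |D x| ≤ |φ' x| * gpdf x + |φ x| * (|x| * gpdf x) := this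
        _ ≤ L * gpdf x + C0 * (1 + x ^ 2) * (|x| * gpdf x) := by linarith
    have h2 := habs x
    have h3 : (0:ℝ) < gpdf x := gpdf_pos x
    rw [hgpdf_eq x] at h1
    have he : (0:ℝ) < Real.exp (-x ^ 2 / 2) := Real.exp_pos _
    have h1x : (0:ℝ) ≤ 1 + x ^ 2 := by positivity
    have key : L + C0 * ((1 + x ^ 2) * |x|) ≤ (L + C0) * (1 + x ^ 2) ^ 2 := by
      nlinarith [mul_le_mul_of_nonneg_left h2 (mul_nonneg hC00 h1x),
        mul_nonneg hL0 (sq_nonneg x), mul_nonneg hL0 (sq_nonneg (x ^ 2)),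
        sq_nonneg x, sq_nonneg (x ^ 2)]
    calc |D x| ≤ L * (c * Real.exp (-x ^ 2 / 2))
          + C0 * (1 + x ^ 2) * (|x| * (c * Real.exp (-x ^ 2 / 2))) := h1
      _ = (L + C0 * ((1 + x ^ 2) * |x|)) * (c * Real.exp (-x ^ 2 / 2)) := by ring
      _ ≤ ((L + C0) * (1 + x ^ 2) ^ 2) * (c * Real.exp (-x ^ 2 / 2)) :=
          mul_le_mul_of_nonneg_right key (by positivity)
      _ = (L + C0) * c * ((1 + x ^ 2) ^ 2 * Real.exp (-x ^ 2 / 2)) := by ring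
  have hDcont : Continuous D :=
    (hcont.mul continuous_gpdf).add (hφc.mul ((continuous_id'.neg).mul continuous_gpdf))
  have hDint : Integrable D := integrable_of_poly_gauss_bound hDcont _ hDb
  have hψb : ∀ x : ℝ, |ψ x| ≤ (C0 * c) * ((1 + x ^ 2) ^ 2 * Real.exp (-x ^ 2 / 2)) := by
    intro x
    rw [hψ]
    simp only
    rw [abs_mul, abs_of_pos (gpdf_pos x), hgpdf_eq x]
    have he : (0:ℝ) < Real.exp (-x ^ 2 / 2) := Real.exp_pos _
    have h1x : (0:ℝ) ≤ 1 + x ^ 2 := by positivity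
    have hb1 := hphi_b x
    have key : C0 * (1 + x ^ 2) ≤ C0 * (1 + x ^ 2) ^ 2 := by
      nlinarith [mul_nonneg hC00 (sq_nonneg x), mul_nonneg hC00 (sq_nonneg (x ^ 2)), sq_nonneg x]
    calc |φ x| * (c * Real.exp (-x ^ 2 / 2))
        ≤ (C0 * (1 + x ^ 2)) * (c * Real.exp (-x ^ 2 / 2)) :=
          mul_le_mul_of_nonneg_right hb1 (by positivity)
      _ ≤ (C0 * (1 + x ^ 2) ^ 2) * (c * Real.exp (-x ^ 2 / 2)) :=
          mul_le_mul_of_nonneg_right key (by positivity)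
      _ = C0 * c * ((1 + x ^ 2) ^ 2 * Real.exp (-x ^ 2 / 2)) := by ring
  have hψtop : Tendsto ψ atTop (nhds 0) := tendsto_of_poly_gauss_bound _ hψb atTop sq_tendsto_atTop
  have hψbot : Tendsto ψ atBot (nhds 0) := tendsto_of_poly_gauss_bound _ hψb atBot sq_tendsto_atBot
  have hIoi : ∫ x in Set.Ioi (0:ℝ), D x = 0 - ψ 0 :=
    integral_Ioi_of_hasDerivAt_of_tendsto' (fun x _ => hderψ x) hDint.integrableOn hψtop
  have hIic : ∫ x in Set.Iic (0:ℝ), D x = ψ 0 - 0 :=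
    integral_Iic_of_hasDerivAt_of_tendsto' (fun x _ => hderψ x) hDint.integrableOn hψbot
  have hDzero : ∫ x, D x = 0 := by
    rw [← intervalIntegral.integral_Iic_add_Ioi hDint.integrableOn hDint.integrableOn, hIoi, hIic]
    ring
  -- convert both sides
  rw [integral_gauss_eq, integral_gauss_eq]
  have h1 : Integrable (fun x => gpdf x * (x * φ x)) := by
    refine integrable_of_poly_gauss_bound (continuous_gpdf.mul (continuous_id'.mul hφc))
      (C0 * c) ?_
    intro x
    rw [abs_mul, abs_mul, abs_of_pos (gpdf_pos x), hgpdf_eq x]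
    have he : (0:ℝ) < Real.exp (-x ^ 2 / 2) := Real.exp_pos _
    have h1x : (0:ℝ) ≤ 1 + x ^ 2 := by positivity
    have h2 := habs x
    have h3 := hphi_b x
    have key : |x| * |φ x| ≤ (1 + x ^ 2) * (C0 * (1 + x ^ 2)) :=
      mul_le_mul h2 h3 (abs_nonneg _) h1x
    calc c * Real.exp (-x ^ 2 / 2) * (|x| * |φ x|)
        ≤ c * Real.exp (-x ^ 2 / 2) * ((1 + x ^ 2) * (C0 * (1 + x ^ 2))) :=
          mul_le_mul_of_nonneg_left key (by positivity)
      _ = C0 * c * ((1 + x ^ 2) ^ 2 * Real.exp (-x ^ 2 / 2)) := by ring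
  have h2 : Integrable (fun x => gpdf x * φ' x) := by
    refine integrable_of_poly_gauss_bound (continuous_gpdf.mul hcont) (L * c) ?_
    intro x
    rw [abs_mul, abs_of_pos (gpdf_pos x), hgpdf_eq x]
    have he : (0:ℝ) < Real.exp (-x ^ 2 / 2) := Real.exp_pos _
    have h5 := hL x
    have key : |φ' x| ≤ L * (1 + x ^ 2) ^ 2 := by
      nlinarith [mul_nonneg hL0 (sq_nonneg x), mul_nonneg hL0 (sq_nonneg (x ^ 2)), sq_nonneg x]
    calc c * Real.exp (-x ^ 2 / 2) * |φ' x|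
        ≤ c * Real.exp (-x ^ 2 / 2) * (L * (1 + x ^ 2) ^ 2) :=
          mul_le_mul_of_nonneg_left key (by positivity)
      _ = L * c * ((1 + x ^ 2) ^ 2 * Real.exp (-x ^ 2 / 2)) := by ring
  have hsub : ∫ x, (gpdf x * (x * φ x) - gpdf x * φ' x) =
      (∫ x, gpdf x * (x * φ x)) - ∫ x, gpdf x * φ' x := integral_sub h1 h2
  have heq : ∀ x, gpdf x * (x * φ x) - gpdf x * φ' x = -D x := by
    intro x; rw [hD]; ring
  have : ∫ x, (gpdf x * (x * φ x) - gpdf x * φ' x) = 0 := by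
    rw [integral_congr_ae (Filter.Eventually.of_forall heq), integral_neg, hDzero, neg_zero]
  rw [this] at hsub
  linarith [hsub]

-- Part 2: gaussian moments
lemma integrable_id_gauss : Integrable (fun x : ℝ => x) (gaussianReal 0 1) := by
  refine integrable_gauss_of_bound _ continuous_id' 1 fun x => ?_
  rcases le_or_gt (|x|) 1 with h | h
  · nlinarith [sq_nonneg x]
  · nlinarith [sq_abs x]

lemma integrable_sq_gauss : Integrable (fun x : ℝ => x * x) (gaussianReal 0 1) := by
  refine integrable_gauss_of_bound _ (continuous_id'.mul continuous_id') 1 fun x => ?_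
  have : |x * x| = x ^ 2 := by rw [abs_mul, ← sq_abs]; ring
  rw [this]; nlinarith [sq_nonneg x]

lemma integral_id_gauss : ∫ t, t ∂(gaussianReal 0 1) = 0 := by
  have h := gauss_ibp (fun _ => 1) (fun _ => 0) (fun t => hasDerivAt_const t 1)
    continuous_const (L := 0) (fun t => by simp)
  simpa using h

lemma integral_sq_gauss : ∫ t, t * t ∂(gaussianReal 0 1) = 1 := by
  have h := gauss_ibp (fun t => t) (fun _ => 1) (fun t => hasDerivAt_id t)
    continuous_const (L := 1) (fun t => by simp)
  simpa using h

-- Part 3: splitting the product gaussian at a coordinate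
section Split

variable {ι : Type*} [Fintype ι] [DecidableEq ι]

/-- The measure of i.i.d. standard gaussians indexed by `ι`. -/
def gpi (ι : Type*) [Fintype ι] : Measure (ι → ℝ) := Measure.pi fun _ => gaussianReal 0 1

instance : IsProbabilityMeasure (gpi ι) := by
  unfold gpi; infer_instance

/-- Update map realizing the splitting of the product at coordinate `y`. -/
def Tup (y : ι) : ((ι → ℝ) × ℝ) → (ι → ℝ) := fun p => Function.update p.1 y p.2

lemma measurable_Tup (y : ι) : Measurable (Tup y) := by
  refine measurable_pi_lambda _ fun i => ?_
  by_cases h : i = y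
  · subst h; simpa [Tup] using measurable_snd
  · simp only [Tup, Function.update_apply, h, if_false]
    exact (measurable_pi_apply i).comp measurable_fst

lemma continuous_Tup (y : ι) : Continuous (Tup y) := by
  refine continuous_pi fun i => ?_
  by_cases h : i = y
  · subst h; simpa [Tup] using continuous_snd
  · simp only [Tup, Function.update_apply, h, if_false]
    exact (continuous_apply i).comp continuous_fst

lemma map_Tup (y : ι) : ((gpi ι).prod (gaussianReal 0 1)).map (Tup y) = gpi ι := by
  have : gpi ι = Measure.pi fun _ : ι => gaussianReal 0 1 := rfl
  rw [this]
  refine (Measure.pi_eq fun s hs => ?_).symm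
  rw [Measure.map_apply (measurable_Tup y) (MeasurableSet.univ_pi hs)]
  have hpre : Tup y ⁻¹' (Set.pi Set.univ s) =
      (Set.pi Set.univ (Function.update s y Set.univ)) ×ˢ (s y) := by
    ext ⟨g, t⟩
    simp only [Set.mem_preimage, Set.mem_pi, Set.mem_univ, forall_true_left, Set.mem_prod,
      Tup, Function.update_apply]
    constructor
    · intro h
      refine ⟨fun i => ?_, by simpa using h y⟩
      by_cases hi : i = y
      · simp [hi]
      · have := h i; simp [hi] at this ⊢; exact this
    · rintro ⟨h1, h2⟩ i
      by_cases hi : i = y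
      · simpa [hi] using h2
      · have := h1 i; simp [hi] at this ⊢; exact this
  rw [hpre, Measure.prod_prod, Measure.pi_pi]
  have hcong : ∀ x : ι, (gaussianReal 0 1) (Function.update s y Set.univ x) =
      Function.update (fun x => (gaussianReal 0 1) (s x)) y 1 x := by
    intro x
    by_cases h : x = y <;> simp [h, Function.update_apply, measure_univ]
  rw [Finset.prod_congr rfl (fun x _ => hcong x),
    Finset.prod_update_of_mem (Finset.mem_univ y)]
  rw [Finset.prod_eq_mul_prod_sdiff_singleton_of_mem (Finset.mem_univ y)
    (fun x => (gaussianReal 0 1) (s x))]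
  ring

lemma integral_Tup (y : ι) (f : (ι → ℝ) → ℝ) (hf : AEStronglyMeasurable f (gpi ι)) :
    ∫ g, f g ∂(gpi ι) = ∫ p, f (Tup y p) ∂((gpi ι).prod (gaussianReal 0 1)) := by
  have hf' : AEStronglyMeasurable f (((gpi ι).prod (gaussianReal 0 1)).map (Tup y)) := by
    rw [map_Tup y]; exact hf
  conv_lhs => rw [← map_Tup y]
  exact integral_map (measurable_Tup y).aemeasurable hf'

lemma integrable_Tup_iff (y : ι) (f : (ι → ℝ) → ℝ) (hf : AEStronglyMeasurable f (gpi ι)) :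
    Integrable f (gpi ι) ↔
      Integrable (fun p => f (Tup y p)) ((gpi ι).prod (gaussianReal 0 1)) := by
  have hf' : AEStronglyMeasurable f (((gpi ι).prod (gaussianReal 0 1)).map (Tup y)) := by
    rw [map_Tup y]; exact hf
  conv_lhs => rw [← map_Tup y]
  exact integrable_map_measure hf' (measurable_Tup y).aemeasurable

lemma Tup_apply_self (y : ι) (p : (ι → ℝ) × ℝ) : Tup y p y = p.2 := by
  simp [Tup]

lemma Tup_apply_ne (y z : ι) (hzy : z ≠ y) (p : (ι → ℝ) × ℝ) : Tup y p z = p.1 z := by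
  simp [Tup, Function.update_apply, hzy]

lemma integrable_coord (z : ι) : Integrable (fun g => g z) (gpi ι) := by
  rw [integrable_Tup_iff z _ (measurable_pi_apply z).aestronglyMeasurable]
  have : Integrable (fun p : (ι → ℝ) × ℝ => (fun _ : ι → ℝ => (1:ℝ)) p.1 * p.2)
      ((gpi ι).prod (gaussianReal 0 1)) :=
    (integrable_const 1).mul_prod integrable_id_gauss
  refine this.congr (Filter.Eventually.of_forall fun p => ?_)
  simp [Tup_apply_self]

lemma integrable_coord_mul (y z : ι) : Integrable (fun g => g y * g z) (gpi ι) := by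
  rw [integrable_Tup_iff y _
    ((measurable_pi_apply y).fun_mul (measurable_pi_apply z)).aestronglyMeasurable]
  by_cases hzy : z = y
  · subst hzy
    have : Integrable (fun p : (ι → ℝ) × ℝ => (fun _ : ι → ℝ => (1:ℝ)) p.1 * (p.2 * p.2))
        ((gpi ι).prod (gaussianReal 0 1)) :=
      (integrable_const 1).mul_prod integrable_sq_gauss
    refine this.congr (Filter.Eventually.of_forall fun p => ?_)
    simp [Tup_apply_self]
  · have : Integrable (fun p : (ι → ℝ) × ℝ => p.1 z * p.2)
        ((gpi ι).prod (gaussianReal 0 1)) :=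
      (integrable_coord z).mul_prod integrable_id_gauss
    refine this.congr (Filter.Eventually.of_forall fun p => ?_)
    simp only [Tup_apply_self, Tup_apply_ne y z hzy]
    ring

lemma integral_coord_mul_ne (y z : ι) (hyz : y ≠ z) :
    ∫ g, g y * g z ∂(gpi ι) = 0 := by
  rw [integral_Tup y _ ((measurable_pi_apply y).fun_mul (measurable_pi_apply z)).aestronglyMeasurable]
  have : ∫ p, Tup y p y * Tup y p z ∂((gpi ι).prod (gaussianReal 0 1)) =
      ∫ p : (ι → ℝ) × ℝ, p.1 z * p.2 ∂((gpi ι).prod (gaussianReal 0 1)) := by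
    refine integral_congr_ae (Filter.Eventually.of_forall fun p => ?_)
    simp only [Tup_apply_self, Tup_apply_ne y z (Ne.symm hyz)]
    ring
  rw [this, integral_prod_mul (fun g : ι → ℝ => g z) (fun t : ℝ => t), integral_id_gauss,
    mul_zero]

lemma integral_coord_sq (y : ι) : ∫ g, g y * g y ∂(gpi ι) = 1 := by
  rw [integral_Tup y _ ((measurable_pi_apply y).fun_mul (measurable_pi_apply y)).aestronglyMeasurable]
  have : ∫ p, Tup y p y * Tup y p y ∂((gpi ι).prod (gaussianReal 0 1)) =
      ∫ p : (ι → ℝ) × ℝ, (fun _ : ι → ℝ => (1:ℝ)) p.1 * (p.2 * p.2)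
        ∂((gpi ι).prod (gaussianReal 0 1)) := by
    refine integral_congr_ae (Filter.Eventually.of_forall fun p => ?_)
    simp only [Tup_apply_self]; ring
  rw [this, integral_prod_mul (fun _ : ι → ℝ => (1:ℝ)) (fun t : ℝ => t * t),
    integral_sq_gauss, integral_const]
  simp

end Split

section GibbsLemmas

variable {d n : ℕ} {β h : ℝ}

lemma abs_spin (b : Bool) : |spin b| = 1 := by
  cases b <;> simp [spin]

lemma Z_pos (g : {x // x ∈ box d n} → ℝ) : 0 < Z d n β h g := by
  refine Finset.sum_pos (fun σ _ => Real.exp_pos _) ?_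
  exact ⟨fun _ => true, Finset.mem_univ _⟩

lemma abs_gibbs_le (g : {x // x ∈ box d n} → ℝ) (f : Config d n → ℝ) (C : ℝ)
    (hC : ∀ σ, |f σ| ≤ C) : |gibbs d n β h g f| ≤ C := by
  have hZ := Z_pos (β := β) (h := h) g
  rw [gibbs, abs_div, abs_of_pos hZ, div_le_iff₀ hZ]
  calc |∑ σ : Config d n, f σ * Real.exp (energy d n β h g σ)|
      ≤ ∑ σ : Config d n, |f σ * Real.exp (energy d n β h g σ)| := Finset.abs_sum_le_sum_abs _ _
    _ ≤ ∑ σ : Config d n, C * Real.exp (energy d n β h g σ) := by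
        refine Finset.sum_le_sum fun σ _ => ?_
        rw [abs_mul, Real.abs_exp]
        exact mul_le_mul_of_nonneg_right (hC σ) (Real.exp_pos _).le
    _ = C * Z d n β h g := by rw [Z, Finset.mul_sum]

lemma abs_gibbs_spin_le (g : {x // x ∈ box d n} → ℝ) (x : {x // x ∈ box d n}) :
    |gibbs d n β h g (fun σ => spin (σ x))| ≤ 1 :=
  abs_gibbs_le g _ 1 fun σ => (abs_spin _).le

lemma abs_gibbs_spin2_le (g : {x // x ∈ box d n} → ℝ) (x y : {x // x ∈ box d n}) :
    |gibbs d n β h g (fun σ => spin (σ x) * spin (σ y))| ≤ 1 :=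
  abs_gibbs_le g _ 1 fun σ => by rw [abs_mul, abs_spin, abs_spin, mul_one]

lemma continuous_energy (σ : Config d n) : Continuous fun g => energy d n β h g σ := by
  unfold energy
  exact continuous_const.add (continuous_const.mul
    (continuous_finset_sum _ fun x _ => (continuous_apply x).mul continuous_const))

lemma continuous_Z : Continuous fun g => Z d n β h g := by
  unfold Z
  exact continuous_finset_sum _ fun σ _ => (continuous_energy σ).rexp

lemma continuous_gibbs (f : Config d n → ℝ) : Continuous fun g => gibbs d n β h g f := by
  unfold gibbs
  exact (continuous_finset_sum _ fun σ _ =>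
    continuous_const.mul (continuous_energy σ).rexp).div continuous_Z fun g => (Z_pos g).ne'

lemma energy_update (g : {x // x ∈ box d n} → ℝ) (y : {x // x ∈ box d n}) (t : ℝ)
    (σ : Config d n) :
    energy d n β h (Function.update g y t) σ
      = energy d n β h g σ + h * spin (σ y) * (t - g y) := by
  unfold energy
  have key : ∑ x : {x // x ∈ box d n}, Function.update g y t x * spin (σ x)
      = ∑ x : {x // x ∈ box d n},
          (g x * spin (σ x) + if x = y then spin (σ y) * (t - g y) else 0) := by
    refine Finset.sum_congr rfl fun x _ => ?_
    by_cases hx : x = y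
    · subst hx; simp [Function.update_self]; ring
    · simp [Function.update_of_ne hx, hx]
  rw [key, Finset.sum_add_distrib, Finset.sum_ite_eq' Finset.univ y
    (fun _ => spin (σ y) * (t - g y))]
  simp only [Finset.mem_univ, if_true]
  ring

lemma hasDerivAt_sum_exp (g : {x // x ∈ box d n} → ℝ) (y : {x // x ∈ box d n})
    (f : Config d n → ℝ) (t₀ : ℝ) :
    HasDerivAt (fun t => ∑ σ : Config d n, f σ * Real.exp (energy d n β h (Function.update g y t) σ))
      (∑ σ : Config d n, f σ * ((h * spin (σ y))
        * Real.exp (energy d n β h (Function.update g y t₀) σ))) t₀ := by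
  refine HasDerivAt.fun_sum fun σ _ => ?_
  have he : HasDerivAt (fun t => energy d n β h (Function.update g y t) σ) (h * spin (σ y)) t₀ := by
    have hfn : (fun t => energy d n β h (Function.update g y t) σ)
        = fun t => energy d n β h g σ + h * spin (σ y) * (t - g y) :=
      funext fun t => energy_update g y t σ
    rw [hfn]
    have := (((hasDerivAt_id t₀).sub_const (g y)).const_mul (h * spin (σ y))).const_add
      (energy d n β h g σ)
    simpa using this
  have h2 := (he.exp).const_mul (f σ)
  exact h2.congr_deriv (by ring)

lemma hasDerivAt_gibbs (g : {x // x ∈ box d n} → ℝ) (y : {x // x ∈ box d n})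
    (f : Config d n → ℝ) (t₀ : ℝ) :
    HasDerivAt (fun t => gibbs d n β h (Function.update g y t) f)
      (h * (gibbs d n β h (Function.update g y t₀) (fun σ => f σ * spin (σ y))
        - gibbs d n β h (Function.update g y t₀) f
          * gibbs d n β h (Function.update g y t₀) (fun σ => spin (σ y)))) t₀ := by
  set g' := Function.update g y t₀ with hg'
  have hN := hasDerivAt_sum_exp (β := β) (h := h) g y f t₀
  have hZ : HasDerivAt (fun t => Z d n β h (Function.update g y t))
      (∑ σ : Config d n, (h * spin (σ y)) * Real.exp (energy d n β h g' σ)) t₀ := by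
    have := hasDerivAt_sum_exp (β := β) (h := h) g y (fun _ => 1) t₀
    simpa [Z] using this
  have hdiv := hN.fun_div hZ (Z_pos g').ne'
  have hfn : (fun t => (∑ σ : Config d n, f σ * Real.exp (energy d n β h (Function.update g y t) σ))
      / Z d n β h (Function.update g y t)) = fun t => gibbs d n β h (Function.update g y t) f :=
    funext fun t => rfl
  rw [hfn] at hdiv
  refine hdiv.congr_deriv ?_
  have e1 : (∑ σ : Config d n, f σ * ((h * spin (σ y)) * Real.exp (energy d n β h g' σ)))
      = h * ∑ σ : Config d n, (f σ * spin (σ y)) * Real.exp (energy d n β h g' σ) := by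
    rw [Finset.mul_sum]; exact Finset.sum_congr rfl fun σ _ => by ring
  have e2 : (∑ σ : Config d n, (h * spin (σ y)) * Real.exp (energy d n β h g' σ))
      = h * ∑ σ : Config d n, spin (σ y) * Real.exp (energy d n β h g' σ) := by
    rw [Finset.mul_sum]; exact Finset.sum_congr rfl fun σ _ => by ring
  rw [e1, e2]
  unfold gibbs
  rw [← hg']
  have hZ0 : Z d n β h g' ≠ 0 := (Z_pos g').ne'
  field_simp

end GibbsLemmas

section Main

variable {d n : ℕ} {β h : ℝ}

/-- Gibbs magnetization at `x`. -/
def mg (d n : ℕ) (β h : ℝ) (x : {x // x ∈ box d n}) : ({x // x ∈ box d n} → ℝ) → ℝ :=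
  fun g => gibbs d n β h g (fun σ => spin (σ x))

/-- Truncated two-point function. -/
def cg (d n : ℕ) (β h : ℝ) (x y : {x // x ∈ box d n}) : ({x // x ∈ box d n} → ℝ) → ℝ :=
  fun g => gibbs d n β h g (fun σ => spin (σ x) * spin (σ y))
    - gibbs d n β h g (fun σ => spin (σ x)) * gibbs d n β h g (fun σ => spin (σ y))

lemma continuous_mg (x : {x // x ∈ box d n}) : Continuous (mg d n β h x) := continuous_gibbs _

lemma continuous_cg (x y : {x // x ∈ box d n}) : Continuous (cg d n β h x y) :=
  (continuous_gibbs _).sub ((continuous_gibbs _).mul (continuous_gibbs _))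

lemma abs_mg_le (x : {x // x ∈ box d n}) (g : {x // x ∈ box d n} → ℝ) :
    |mg d n β h x g| ≤ 1 := abs_gibbs_spin_le g x

lemma abs_cg_le (x y : {x // x ∈ box d n}) (g : {x // x ∈ box d n} → ℝ) :
    |cg d n β h x y g| ≤ 2 := by
  have h1 := abs_gibbs_spin2_le (β := β) (h := h) g x y
  have h2 := abs_gibbs_spin_le (β := β) (h := h) g x
  have h3 := abs_gibbs_spin_le (β := β) (h := h) g y
  have := abs_sub (gibbs d n β h g (fun σ => spin (σ x) * spin (σ y)))
    (gibbs d n β h g (fun σ => spin (σ x)) * gibbs d n β h g (fun σ => spin (σ y)))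
  rw [cg]
  refine le_trans (abs_sub _ _) ?_
  rw [abs_mul]
  nlinarith [abs_nonneg (gibbs d n β h g (fun σ => spin (σ x))),
    abs_nonneg (gibbs d n β h g (fun σ => spin (σ y)))]

lemma ibp_main (x y : {x // x ∈ box d n}) :
    ∫ g, g y * mg d n β h x g ∂(gpi {x // x ∈ box d n})
      = h * ∫ g, cg d n β h x y g ∂(gpi {x // x ∈ box d n}) := by
  have hmc := continuous_mg (β := β) (h := h) x
  have hcc := continuous_cg (β := β) (h := h) x y
  have step1 : ∫ g, g y * mg d n β h x g ∂(gpi {x // x ∈ box d n})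
      = ∫ p, p.2 * mg d n β h x (Tup y p)
          ∂((gpi {x // x ∈ box d n}).prod (gaussianReal 0 1)) := by
    rw [integral_Tup y _ ((measurable_pi_apply y).fun_mul hmc.measurable).aestronglyMeasurable]
    refine integral_congr_ae (Filter.Eventually.of_forall fun p => ?_)
    simp only [Tup_apply_self]
  have hintm : Integrable (fun p : ({x // x ∈ box d n} → ℝ) × ℝ =>
      p.2 * mg d n β h x (Tup y p)) ((gpi {x // x ∈ box d n}).prod (gaussianReal 0 1)) := by
    have habs : Integrable (fun p : ({x // x ∈ box d n} → ℝ) × ℝ =>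
        |(fun _ : {x // x ∈ box d n} → ℝ => (1:ℝ)) p.1 * p.2|)
        ((gpi {x // x ∈ box d n}).prod (gaussianReal 0 1)) :=
      ((integrable_const 1).mul_prod integrable_id_gauss).abs
    refine habs.mono' ((continuous_snd.mul (hmc.comp (continuous_Tup y))).aestronglyMeasurable)
      (Filter.Eventually.of_forall fun p => ?_)
    have hb := abs_mg_le (β := β) (h := h) x (Tup y p)
    simp only [Real.norm_eq_abs, abs_mul, one_mul]
    exact mul_le_of_le_one_right (abs_nonneg _) hb
  have step3 : ∫ p, p.2 * mg d n β h x (Tup y p)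
        ∂((gpi {x // x ∈ box d n}).prod (gaussianReal 0 1))
      = ∫ g, ∫ t, t * mg d n β h x (Function.update g y t) ∂(gaussianReal 0 1)
          ∂(gpi {x // x ∈ box d n}) := by
    rw [integral_prod _ hintm]
    rfl
  have hupd : ∀ g : {x // x ∈ box d n} → ℝ, Continuous fun t : ℝ => Function.update g y t := by
    intro g
    have : (fun t : ℝ => Function.update g y t) = fun t => Tup y (g, t) := rfl
    rw [this]
    exact (continuous_Tup y).comp (continuous_const.prodMk continuous_id)
  have step4 : ∀ g : {x // x ∈ box d n} → ℝ,
      ∫ t, t * mg d n β h x (Function.update g y t) ∂(gaussianReal 0 1)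
      = ∫ t, h * cg d n β h x y (Function.update g y t) ∂(gaussianReal 0 1) := by
    intro g
    refine gauss_ibp _ _ (fun t => ?_) (continuous_const.mul (hcc.comp (hupd g)))
      (L := |h| * 2) (fun t => ?_)
    · exact hasDerivAt_gibbs g y (fun σ => spin (σ x)) t
    · rw [abs_mul]
      exact mul_le_mul_of_nonneg_left (abs_cg_le x y _) (abs_nonneg _)
  have hintc : Integrable (fun p : ({x // x ∈ box d n} → ℝ) × ℝ =>
      h * cg d n β h x y (Tup y p)) ((gpi {x // x ∈ box d n}).prod (gaussianReal 0 1)) := by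
    refine (integrable_const (|h| * 2)).mono'
      ((continuous_const.mul (hcc.comp (continuous_Tup y))).aestronglyMeasurable)
      (Filter.Eventually.of_forall fun p => ?_)
    rw [Real.norm_eq_abs, abs_mul]
    exact mul_le_mul_of_nonneg_left (abs_cg_le x y _) (abs_nonneg _)
  have step5 : ∫ g, ∫ t, h * cg d n β h x y (Function.update g y t) ∂(gaussianReal 0 1)
        ∂(gpi {x // x ∈ box d n})
      = ∫ g, h * cg d n β h x y g ∂(gpi {x // x ∈ box d n}) := by
    have e1 : ∫ p, h * cg d n β h x y (Tup y p)
          ∂((gpi {x // x ∈ box d n}).prod (gaussianReal 0 1))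
        = ∫ g, ∫ t, h * cg d n β h x y (Function.update g y t) ∂(gaussianReal 0 1)
            ∂(gpi {x // x ∈ box d n}) := by
      rw [integral_prod _ hintc]
      rfl
    rw [← e1, ← integral_Tup y _ (continuous_const.fun_mul hcc).aestronglyMeasurable]
  rw [step1, step3, integral_congr_ae (Filter.Eventually.of_forall step4), step5,
    integral_const_mul]

lemma bessel (x : {x // x ∈ box d n}) :
    ∑ y : {x // x ∈ box d n},
      (∫ g, g y * mg d n β h x g ∂(gpi {x // x ∈ box d n})) ^ 2 ≤ 1 := by
  set m := mg d n β h x with hm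
  have hmc : Continuous m := continuous_mg x
  have hmb : ∀ g, |m g| ≤ 1 := abs_mg_le x
  set a : {x // x ∈ box d n} → ℝ :=
    fun y => ∫ g, g y * m g ∂(gpi {x // x ∈ box d n}) with ha
  set s : ({x // x ∈ box d n} → ℝ) → ℝ := fun g => ∑ y : {x // x ∈ box d n}, a y * g y with hs
  have Imm : Integrable (fun g => m g * m g) (gpi {x // x ∈ box d n}) := by
    refine (integrable_const (1:ℝ)).mono' ((hmc.mul hmc).aestronglyMeasurable)
      (Filter.Eventually.of_forall fun g => ?_)
    rw [Real.norm_eq_abs, abs_mul]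
    nlinarith [hmb g, abs_nonneg (m g)]
  have Imy : ∀ y : {x // x ∈ box d n},
      Integrable (fun g => m g * g y) (gpi {x // x ∈ box d n}) := by
    intro y
    refine ((integrable_coord y).abs).mono'
      ((hmc.mul (continuous_apply y)).aestronglyMeasurable)
      (Filter.Eventually.of_forall fun g => ?_)
    rw [Real.norm_eq_abs, abs_mul]
    nlinarith [hmb g, abs_nonneg (g y)]
  have Ims : Integrable (fun g => ∑ y : {x // x ∈ box d n}, a y * (m g * g y))
      (gpi {x // x ∈ box d n}) :=
    integrable_finset_sum _ fun y _ => (Imy y).const_mul (a y)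
  have Iss : Integrable
      (fun g => ∑ y : {x // x ∈ box d n}, ∑ z : {x // x ∈ box d n}, (a y * a z) * (g y * g z))
      (gpi {x // x ∈ box d n}) :=
    integrable_finset_sum _ fun y _ =>
      integrable_finset_sum _ fun z _ => (integrable_coord_mul y z).const_mul _
  have expand : ∀ g : {x // x ∈ box d n} → ℝ, (m g - s g) ^ 2
      = (m g * m g - 2 * ∑ y : {x // x ∈ box d n}, a y * (m g * g y))
        + ∑ y : {x // x ∈ box d n}, ∑ z : {x // x ∈ box d n}, (a y * a z) * (g y * g z) := by
    intro g
    have h1 : m g * s g = ∑ y : {x // x ∈ box d n}, a y * (m g * g y) := by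
      rw [hs, Finset.mul_sum]
      exact Finset.sum_congr rfl fun y _ => by ring
    have h2 : s g * s g
        = ∑ y : {x // x ∈ box d n}, ∑ z : {x // x ∈ box d n}, (a y * a z) * (g y * g z) := by
      rw [hs, Finset.sum_mul_sum]
      exact Finset.sum_congr rfl fun y _ => Finset.sum_congr rfl fun z _ => by ring
    calc (m g - s g) ^ 2 = (m g * m g - 2 * (m g * s g)) + s g * s g := by ring
      _ = _ := by rw [h1, h2]
  have hIs1 : ∫ g, ∑ y : {x // x ∈ box d n}, a y * (m g * g y) ∂(gpi {x // x ∈ box d n})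
      = ∑ y : {x // x ∈ box d n}, a y ^ 2 := by
    rw [integral_finset_sum _ fun y _ => (Imy y).const_mul (a y)]
    refine Finset.sum_congr rfl fun y _ => ?_
    rw [integral_const_mul]
    have e : ∫ g, m g * g y ∂(gpi {x // x ∈ box d n}) = a y := by
      rw [ha]
      exact integral_congr_ae (Filter.Eventually.of_forall fun g => by ring)
    rw [e]; ring
  have hIs2 : ∫ g, ∑ y : {x // x ∈ box d n}, ∑ z : {x // x ∈ box d n},
        (a y * a z) * (g y * g z) ∂(gpi {x // x ∈ box d n})
      = ∑ y : {x // x ∈ box d n}, a y ^ 2 := by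
    rw [integral_finset_sum _ fun y _ =>
      integrable_finset_sum _ fun z _ => (integrable_coord_mul y z).const_mul _]
    refine Finset.sum_congr rfl fun y _ => ?_
    rw [integral_finset_sum _ fun z _ => (integrable_coord_mul y z).const_mul _]
    rw [Finset.sum_eq_single_of_mem y (Finset.mem_univ y)]
    · rw [integral_const_mul, integral_coord_sq]; ring
    · intro z _ hzy
      rw [integral_const_mul, integral_coord_mul_ne y z (Ne.symm hzy), mul_zero]
  have nonneg : 0 ≤ ∫ g, (m g - s g) ^ 2 ∂(gpi {x // x ∈ box d n}) :=
    integral_nonneg fun g => sq_nonneg _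
  have eval : ∫ g, (m g - s g) ^ 2 ∂(gpi {x // x ∈ box d n})
      = (∫ g, m g * m g ∂(gpi {x // x ∈ box d n})) - ∑ y : {x // x ∈ box d n}, a y ^ 2 := by
    have I2 : Integrable (fun g : {x // x ∈ box d n} → ℝ =>
        2 * ∑ y : {x // x ∈ box d n}, a y * (m g * g y)) (gpi {x // x ∈ box d n}) :=
      Ims.const_mul 2
    have I1 : Integrable (fun g : {x // x ∈ box d n} → ℝ =>
        m g * m g - 2 * ∑ y : {x // x ∈ box d n}, a y * (m g * g y))
        (gpi {x // x ∈ box d n}) := Imm.sub I2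
    rw [integral_congr_ae (Filter.Eventually.of_forall expand),
      integral_add I1 Iss, integral_sub Imm I2,
      integral_const_mul, hIs1, hIs2]
    ring
  have hint1 : ∫ g, m g * m g ∂(gpi {x // x ∈ box d n}) ≤ 1 := by
    have := integral_mono Imm (integrable_const (1:ℝ)) (fun g => by
      have := hmb g; nlinarith [abs_nonneg (m g), sq_abs (m g)])
    simpa using this
  rw [eval] at nonneg
  linarith

end Main

end

/-- For `r_{x,y} = E(⟨σ_x σ_y⟩ − ⟨σ_x⟩⟨σ_y⟩)`, one has
`∑_{x,y} r_{x,y}² ≤ (2 + h²)|V_n|/h²`. -/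
theorem truncated_correlation_bound (d n : ℕ) (β h : ℝ) (hβ : 0 < β) (hh : 0 < h) :
    ∑ x : {x // x ∈ box d n}, ∑ y : {x // x ∈ box d n},
        (∫ g, (gibbs d n β h g (fun σ => spin (σ x) * spin (σ y))
            - gibbs d n β h g (fun σ => spin (σ x))
              * gibbs d n β h g (fun σ => spin (σ y))) ∂(μdis d n)) ^ 2
      ≤ (2 + h ^ 2) * ((box d n).card : ℝ) / h ^ 2 := by
  have hh2 : (0:ℝ) < h ^ 2 := pow_pos hh 2
  have key : ∀ x y : {x // x ∈ box d n},
      (∫ g, (gibbs d n β h g (fun σ => spin (σ x) * spin (σ y))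
          - gibbs d n β h g (fun σ => spin (σ x))
            * gibbs d n β h g (fun σ => spin (σ y))) ∂(μdis d n))
        = (∫ g, g y * mg d n β h x g ∂(gpi {x // x ∈ box d n})) / h := by
    intro x y
    have h1 := ibp_main (β := β) (h := h) x y
    have h2 : (∫ g, (gibbs d n β h g (fun σ => spin (σ x) * spin (σ y))
        - gibbs d n β h g (fun σ => spin (σ x))
          * gibbs d n β h g (fun σ => spin (σ y))) ∂(μdis d n))
        = ∫ g, cg d n β h x y g ∂(gpi {x // x ∈ box d n}) := rfl
    rw [h2, h1, mul_comm, mul_div_assoc, div_self hh.ne', mul_one]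
  have step : ∀ x : {x // x ∈ box d n},
      ∑ y : {x // x ∈ box d n},
        ((∫ g, g y * mg d n β h x g ∂(gpi {x // x ∈ box d n})) / h) ^ 2 ≤ 1 / h ^ 2 := by
    intro x
    have hb := bessel (β := β) (h := h) x
    have e : ∑ y : {x // x ∈ box d n},
        ((∫ g, g y * mg d n β h x g ∂(gpi {x // x ∈ box d n})) / h) ^ 2
        = (∑ y : {x // x ∈ box d n},
            (∫ g, g y * mg d n β h x g ∂(gpi {x // x ∈ box d n})) ^ 2) / h ^ 2 := by
      rw [Finset.sum_div]
      exact Finset.sum_congr rfl fun y _ => by rw [div_pow]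
    rw [e]
    exact (div_le_div_iff_of_pos_right hh2).mpr hb
  calc ∑ x : {x // x ∈ box d n}, ∑ y : {x // x ∈ box d n},
        (∫ g, (gibbs d n β h g (fun σ => spin (σ x) * spin (σ y))
            - gibbs d n β h g (fun σ => spin (σ x))
              * gibbs d n β h g (fun σ => spin (σ y))) ∂(μdis d n)) ^ 2
      = ∑ x : {x // x ∈ box d n}, ∑ y : {x // x ∈ box d n},
          ((∫ g, g y * mg d n β h x g ∂(gpi {x // x ∈ box d n})) / h) ^ 2 :=
        Finset.sum_congr rfl fun x _ => Finset.sum_congr rfl fun y _ => by rw [key x y]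
    _ ≤ ∑ _x : {x // x ∈ box d n}, 1 / h ^ 2 := Finset.sum_le_sum fun x _ => step x
    _ = ((box d n).card : ℝ) / h ^ 2 := by
        rw [Finset.sum_const, nsmul_eq_mul, Finset.card_univ, Fintype.card_coe]
        ring
    _ ≤ (2 + h ^ 2) * ((box d n).card : ℝ) / h ^ 2 := by
        have hc : (0:ℝ) ≤ ((box d n).card : ℝ) := Nat.cast_nonneg _
        refine (div_le_div_iff_of_pos_right hh2).mpr ?_
        nlinarith
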